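/- Let L be a modular lattice with a least element 0 that is sectionally of finite height, with height function h. Define δ_c : L → ℝ≥0 by δ_c(a) = 0 if a = 0 or a is an atom of L, and δ_c(a) = h(a) otherwise. Then (L, δ_c) is a lattice diversity. -/

import Mathlib

private lemma aux_toNat_lt {a b : ℕ∞} (ha : a ≠ ⊤) (hb : b ≠ ⊤) (h : a < b) :
    a.toNat < b.toNat := by
  rwa [← ENat.coe_toNat ha, ← ENat.coe_toNat hb, Nat.cast_lt] at h

/-- Height of a pair is at most the sum of heights, given finiteness. -/
lemma aux_height_prod_le {α β : Type*} [Preorder α] [Preorder β] :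
    ∀ (n : ℕ) (x : α) (y : β), Order.height x ≠ ⊤ → Order.height y ≠ ⊤ →
    (Order.height x).toNat + (Order.height y).toNat ≤ n →
    Order.height (x, y) ≤ Order.height x + Order.height y := by
  intro n
  induction n with
  | zero =>
    intro x y hx hy hn
    rw [Order.height_eq_iSup_lt_height]
    apply iSup₂_le
    intro z hz
    exfalso
    have hx0 : (Order.height x).toNat = 0 := by omega
    have hy0 : (Order.height y).toNat = 0 := by omega
    have hx0' : Order.height x = 0 := ((ENat.toNat_eq_zero).mp hx0).resolve_right hx
    have hy0' : Order.height y = 0 := ((ENat.toNat_eq_zero).mp hy0).resolve_right hy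
    have hxmin : IsMin x := Order.height_eq_zero.mp hx0'
    have hymin : IsMin y := Order.height_eq_zero.mp hy0'
    rcases Prod.lt_iff.mp hz with ⟨h1, _⟩ | ⟨_, h2⟩
    · exact absurd (hxmin h1.le) (not_le_of_gt h1)
    · exact absurd (hymin h2.le) (not_le_of_gt h2)
  | succ n ih =>
    intro x y hx hy hn
    rw [Order.height_eq_iSup_lt_height]
    apply iSup₂_le
    intro z hz
    have hz1 : z.1 ≤ x := hz.le.1
    have hz2 : z.2 ≤ y := hz.le.2
    have hfz1 : Order.height z.1 ≠ ⊤ :=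
      fun h => hx (top_le_iff.mp (h ▸ Order.height_mono hz1))
    have hfz2 : Order.height z.2 ≠ ⊤ :=
      fun h => hy (top_le_iff.mp (h ▸ Order.height_mono hz2))
    have hle1 : (Order.height z.1).toNat ≤ (Order.height x).toNat :=
      ENat.toNat_le_toNat (Order.height_mono hz1) hx
    have hle2 : (Order.height z.2).toNat ≤ (Order.height y).toNat :=
      ENat.toNat_le_toNat (Order.height_mono hz2) hy
    have hzxy : Order.height z.1 + Order.height z.2 + 1 ≤
        Order.height x + Order.height y := by
      rcases Prod.lt_iff.mp hz with ⟨h1, _⟩ | ⟨_, h2⟩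
      · have h1' : Order.height z.1 < Order.height x :=
          Order.height_strictMono h1 (lt_top_iff_ne_top.mpr hfz1)
        have : Order.height z.1 + 1 ≤ Order.height x := Order.add_one_le_of_lt h1'
        calc Order.height z.1 + Order.height z.2 + 1
            = (Order.height z.1 + 1) + Order.height z.2 := by ring
          _ ≤ Order.height x + Order.height y :=
              add_le_add this (Order.height_mono hz2)
      · have h2' : Order.height z.2 < Order.height y :=
          Order.height_strictMono h2 (lt_top_iff_ne_top.mpr hfz2)
        have : Order.height z.2 + 1 ≤ Order.height y := Order.add_one_le_of_lt h2'
        calc Order.height z.1 + Order.height z.2 + 1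
            = Order.height z.1 + (Order.height z.2 + 1) := by ring
          _ ≤ Order.height x + Order.height y :=
              add_le_add (Order.height_mono hz1) this
    have hmeas : (Order.height z.1).toNat + (Order.height z.2).toNat ≤ n := by
      rcases Prod.lt_iff.mp hz with ⟨h1, _⟩ | ⟨_, h2⟩
      · have := aux_toNat_lt hfz1 hx
          (Order.height_strictMono h1 (lt_top_iff_ne_top.mpr hfz1))
        omega
      · have := aux_toNat_lt hfz2 hy
          (Order.height_strictMono h2 (lt_top_iff_ne_top.mpr hfz2))
        omega
    have hih : Order.height ((z.1, z.2) : α × β) ≤ Order.height z.1 + Order.height z.2 :=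
      ih z.1 z.2 hfz1 hfz2 hmeas
    calc Order.height z + 1 = Order.height ((z.1, z.2) : α × β) + 1 := by rfl
      _ ≤ Order.height z.1 + Order.height z.2 + 1 := add_le_add_left hih 1
      _ ≤ Order.height x + Order.height y := hzxy

/-- In a modular lattice with finite heights, height is submodular on sups. -/
lemma aux_height_sup_le {L : Type*} [Lattice L] [IsModularLattice L]
    (hfin : ∀ a : L, Order.height a ≠ ⊤) (a b : L) :
    Order.height (a ⊔ b) ≤ Order.height a + Order.height b := by
  apply Order.height_le
  intro p hp
  have hmem : ∀ i, p i ≤ a ⊔ b := fun i => hp ▸ p.monotone (Fin.le_last i)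
  set F : Fin (p.length + 1) → L × L := fun i => (p i ⊓ a, (p i ⊔ a) ⊓ b) with hF
  have hstep : ∀ i : Fin p.length, F i.castSucc < F i.succ := by
    intro i
    set x := p i.castSucc with hxdef
    set y := p i.succ with hydef
    have hxy : x < y := p.step i
    have hle : F i.castSucc ≤ F i.succ :=
      ⟨inf_le_inf_right a hxy.le, inf_le_inf_right b (sup_le_sup_right hxy.le a)⟩
    refine lt_of_le_of_ne hle ?_
    intro heq
    have h1 : x ⊓ a = y ⊓ a := congrArg Prod.fst heq
    have h2 : (x ⊔ a) ⊓ b = (y ⊔ a) ⊓ b := congrArg Prod.snd heq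
    -- From h2, deduce x ⊔ a = y ⊔ a using modularity
    have hxmem : x ⊔ a ∈ Set.Icc a (b ⊔ a) := by
      constructor
      · exact le_sup_right
      · exact sup_le (le_trans (hmem i.castSucc) (by rw [sup_comm])) le_sup_right
    have hymem : y ⊔ a ∈ Set.Icc a (b ⊔ a) := by
      constructor
      · exact le_sup_right
      · exact sup_le (le_trans (hmem i.succ) (by rw [sup_comm])) le_sup_right
    have hsupeq : x ⊔ a = y ⊔ a := by
      have heq' : (infIccOrderIsoIccSup b a).symm ⟨x ⊔ a, hxmem⟩ =
          (infIccOrderIsoIccSup b a).symm ⟨y ⊔ a, hymem⟩ := by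
        apply Subtype.ext
        show b ⊓ (x ⊔ a) = b ⊓ (y ⊔ a)
        rw [inf_comm, inf_comm b (y ⊔ a)]
        exact h2
      have := (infIccOrderIsoIccSup b a).symm.injective heq'
      exact congrArg Subtype.val this
    -- Modular law: y = (x ⊔ a) ⊓ y = x ⊔ (a ⊓ y) = x
    have hmod : (x ⊔ a) ⊓ y = x ⊔ (a ⊓ y) := sup_inf_assoc_of_le a hxy.le
    have hyle : y ≤ x ⊔ a := hsupeq ▸ le_sup_left
    have : y = x := by
      have h3 : (x ⊔ a) ⊓ y = y := inf_eq_right.mpr hyle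
      have h4 : a ⊓ y = x ⊓ a := by rw [inf_comm]; exact h1.symm
      rw [h3, h4, sup_inf_self] at hmod
      exact hmod
    exact hxy.ne' this
  let q : LTSeries (L × L) := ⟨p.length, F, hstep⟩
  have hlast : q.last = (a, b) := by
    show F (Fin.last _) = (a, b)
    have hpl : p (Fin.last p.length) = a ⊔ b := hp
    simp only [hF, hpl]
    have e1 : (a ⊔ b) ⊓ a = a := inf_eq_right.mpr le_sup_left
    have e2 : ((a ⊔ b) ⊔ a) ⊓ b = b := by
      rw [sup_comm (a ⊔ b) a, ← sup_assoc, sup_idem]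
      exact inf_eq_right.mpr le_sup_right
    rw [e1, e2]
  have hlen : (q.length : ℕ∞) ≤ Order.height q.last := Order.length_le_height_last
  rw [hlast] at hlen
  calc (p.length : ℕ∞) = (q.length : ℕ∞) := rfl
    _ ≤ Order.height ((a, b) : L × L) := hlen
    _ ≤ Order.height a + Order.height b :=
        aux_height_prod_le ((Order.height a).toNat + (Order.height b).toNat) a b
          (hfin a) (hfin b) le_rfl

/-- `(L, δ)` is a lattice diversity: `L` is a lattice with least element `⊥`,
`δ : L → ℝ` is nonnegative, vanishes exactly on `⊥` and the atoms, is monotone,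
and is subadditive on non-disjoint elements. -/
def IsLatticeDiversity {L : Type*} [Lattice L] [OrderBot L] (δ : L → ℝ) : Prop :=
  (∀ a : L, 0 ≤ δ a) ∧
  (∀ a : L, δ a = 0 ↔ a = ⊥ ∨ IsAtom a) ∧
  (∀ a b : L, a ≤ b → δ a ≤ δ b) ∧
  (∀ a b : L, a ⊓ b ≠ ⊥ → δ (a ⊔ b) ≤ δ a + δ b)

theorem stmt_6 {L : Type*} [Lattice L] [OrderBot L] [IsModularLattice L]
    (hfin : ∀ a : L, Order.height a ≠ ⊤)
    (δ : L → ℝ)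
    (hδzero : ∀ a : L, a = ⊥ ∨ IsAtom a → δ a = 0)
    (hδdef : ∀ a : L, a ≠ ⊥ → ¬ IsAtom a → δ a = ((Order.height a).toNat : ℝ)) :
    IsLatticeDiversity δ := by
  have hnonneg : ∀ a : L, 0 ≤ δ a := by
    intro a
    by_cases h : a = ⊥ ∨ IsAtom a
    · rw [hδzero a h]
    · push_neg at h
      rw [hδdef a h.1 h.2]
      positivity
  have hpos : ∀ a : L, a ≠ ⊥ → ¬ IsAtom a → δ a ≠ 0 := by
    intro a h1 h2
    rw [hδdef a h1 h2]
    have hbot : (⊥ : L) < a := bot_lt_iff_ne_bot.mpr h1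
    have : Order.height (⊥ : L) < Order.height a := by
      apply Order.height_strictMono hbot
      simp
    have hne : Order.height a ≠ 0 := by
      intro h
      rw [h] at this
      exact absurd this (by simp)
    have : (Order.height a).toNat ≠ 0 := by
      intro h
      rcases ENat.toNat_eq_zero.mp h with h' | h'
      · exact hne h'
      · exact hfin a h'
    exact_mod_cast this
  refine ⟨hnonneg, ?_, ?_, ?_⟩
  · intro a
    constructor
    · intro h
      by_contra hc
      push_neg at hc
      exact hpos a hc.1 hc.2 h
    · exact hδzero a
  · -- monotone
    intro a b hab
    by_cases h : a = ⊥ ∨ IsAtom a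
    · rw [hδzero a h]; exact hnonneg b
    · push_neg at h
      obtain ⟨ha1, ha2⟩ := h
      have hb1 : b ≠ ⊥ := fun hb => ha1 (le_bot_iff.mp (hb ▸ hab))
      have hb2 : ¬ IsAtom b := by
        intro hb
        rcases lt_or_eq_of_le hab with h | h
        · exact ha1 (hb.2 a h)
        · exact ha2 (h ▸ hb)
      rw [hδdef a ha1 ha2, hδdef b hb1 hb2]
      exact_mod_cast ENat.toNat_le_toNat (Order.height_mono hab) (hfin b)
  · -- subadditive
    intro a b hab
    have ha : a ≠ ⊥ := by
      intro h
      rw [h, bot_inf_eq] at hab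
      exact hab rfl
    have hb : b ≠ ⊥ := by
      intro h
      rw [h, inf_bot_eq] at hab
      exact hab rfl
    by_cases hAa : IsAtom a
    · -- a is an atom; a ⊓ b ≠ ⊥ forces a ≤ b so a ⊔ b = b
      have hainf : a ⊓ b = a := by
        rcases hAa.le_iff.mp inf_le_left with h | h
        · exact absurd h hab
        · exact h
      have hale : a ≤ b := by rw [← hainf]; exact inf_le_right
      have : a ⊔ b = b := sup_eq_right.mpr hale
      rw [this, hδzero a (Or.inr hAa), zero_add]
    · by_cases hAb : IsAtom b
      · have hbinf : a ⊓ b = b := by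
          rcases hAb.le_iff.mp inf_le_right with h | h
          · exact absurd h hab
          · exact h
        have hble : b ≤ a := by rw [← hbinf]; exact inf_le_left
        have : a ⊔ b = a := sup_eq_left.mpr hble
        rw [this, hδzero b (Or.inr hAb), add_zero]
      · -- both nontrivial
        rw [hδdef a ha hAa, hδdef b hb hAb]
        by_cases hS : IsAtom (a ⊔ b)
        · rw [hδzero (a ⊔ b) (Or.inr hS)]
          positivity
        · have hSne : a ⊔ b ≠ ⊥ := fun h => ha (le_bot_iff.mp (h ▸ le_sup_left))
          rw [hδdef (a ⊔ b) hSne hS]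
          have key : Order.height (a ⊔ b) ≤ Order.height a + Order.height b :=
            aux_height_sup_le hfin a b
          have : (Order.height (a ⊔ b)).toNat ≤
              (Order.height a).toNat + (Order.height b).toNat := by
            have hsum : Order.height a + Order.height b ≠ ⊤ :=
              WithTop.add_ne_top.mpr ⟨hfin a, hfin b⟩
            have := ENat.toNat_le_toNat key hsum
            rwa [ENat.toNat_add (hfin a) (hfin b)] at this
          exact_mod_cast this
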